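/- If Δ is a triangulation of the real projective plane RP^2, then the number of nowhere-zero modular q-flows is 1 if q is even and 0 if q is odd; in particular Φ_Δ is not a polynomial in q. -/

import Mathlib

open Matrix

/-- Sign of ridge `r` inside simplex `s` (alternating sum convention). -/
def csign {n : ℕ} (s r : Finset (Fin n)) : ℤ :=
  if r ⊆ s then (s \ r).sum (fun v => (-1 : ℤ) ^ ((s.filter (fun w => w < v)).card)) else 0

/-- Boundary matrix in dimension `k-1 → k-2` of the simplicial complex `K` on the
vertex set `Fin m` (rows: `(k-1)`-subsets in `K`, columns: `k`-subsets in `K`). -/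
def kbnd {m : ℕ} (K : Finset (Finset (Fin m))) (k : ℕ) :
    Matrix {r : Finset (Fin m) // r ∈ K ∧ r.card = k - 1}
      {s : Finset (Fin m) // s ∈ K ∧ s.card = k} ℤ :=
  fun r s => csign s.1 r.1

/-- Number of nowhere-zero modular `q`-flows of the `d`-dimensional complex `K`. -/
noncomputable def kFlowCount {m : ℕ} (K : Finset (Finset (Fin m))) (d q : ℕ) : ℕ :=
  Nat.card {φ : {s : Finset (Fin m) // s ∈ K ∧ s.card = d + 1} → ZMod q //
    ((kbnd K (d + 1)).map (Int.cast : ℤ → ZMod q)).mulVec φ = 0 ∧ ∀ s, φ s ≠ 0}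

/-- Rank over `ℚ` of an integer matrix. -/
noncomputable def rankQ {a b : Type} [Fintype a] [Fintype b] (M : Matrix a b ℤ) : ℕ :=
  (M.map ((↑) : ℤ → ℚ)).rank

/-- Submatrix on the columns indexed by `X`. -/
def colsub {a b : Type} (M : Matrix a b ℤ) (X : Finset b) : Matrix a X ℤ :=
  M.submatrix id (fun x => x.1)

/-- `β_d(X)`: the top Betti number of the subcomplex `X ∪ Δ_{d-1}`. -/
noncomputable def betaTop {m : ℕ} (K : Finset (Finset (Fin m))) (d : ℕ)
    (X : Finset {s : Finset (Fin m) // s ∈ K ∧ s.card = d + 1}) : ℤ :=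
  (X.card : ℤ) - rankQ (colsub (kbnd K (d + 1)) X)

/-- `β_{d-1}(X)`: the codimension-one Betti number of the subcomplex `X ∪ Δ_{d-1}`,
namely `dim ker ∂_{d-1} − rank ∂_X` over `ℚ`. -/
noncomputable def betaLow {m : ℕ} (K : Finset (Finset (Fin m))) (d : ℕ)
    (X : Finset {s : Finset (Fin m) // s ∈ K ∧ s.card = d + 1}) : ℤ :=
  ((Fintype.card {s : Finset (Fin m) // s ∈ K ∧ s.card = d} : ℤ) - rankQ (kbnd K d))
    - rankQ (colsub (kbnd K (d + 1)) X)

/-- The cycle space `Z_{d-1} = ker ∂_{d-1}` over `ℤ`. -/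
noncomputable def Zlow {m : ℕ} (K : Finset (Finset (Fin m))) (d : ℕ) :
    Submodule ℤ ({s : Finset (Fin m) // s ∈ K ∧ s.card = d} → ℤ) :=
  LinearMap.ker (kbnd K d).mulVecLin

/-- The boundary space `B_{d-1} = im ∂_d` over `ℤ`. -/
noncomputable def Blow {m : ℕ} (K : Finset (Finset (Fin m))) (d : ℕ) :
    Submodule ℤ ({s : Finset (Fin m) // s ∈ K ∧ s.card = d} → ℤ) :=
  LinearMap.range (kbnd K (d + 1)).mulVecLin

/-- Integral homology `H_{d-1}(Δ; ℤ) = Z_{d-1} / B_{d-1}`. -/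
noncomputable abbrev Hlow {m : ℕ} (K : Finset (Finset (Fin m))) (d : ℕ) :=
  (Zlow K d) ⧸ (Submodule.comap (Zlow K d).subtype (Blow K d))

section csignlemmas
variable {m : ℕ}

lemma csign_not_subset {s r : Finset (Fin m)} (h : ¬ r ⊆ s) : csign s r = 0 := if_neg h

lemma csign_sdiff {s r : Finset (Fin m)} (h : r ⊆ s) {w : Fin m} (hw : s \ r = {w}) :
    csign s r = (-1 : ℤ) ^ ((s.filter (fun u => u < w)).card) := by
  rw [csign, if_pos h, hw, Finset.sum_singleton]

lemma pair_sdiff_left (a b : Fin m) (hab : a ≠ b) :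
    ({a, b} : Finset (Fin m)) \ {a} = {b} := by
  ext x
  simp only [Finset.mem_sdiff, Finset.mem_insert, Finset.mem_singleton]
  constructor
  · rintro ⟨h1 | h1, h2⟩ <;> tauto
  · rintro rfl; exact ⟨Or.inr rfl, hab.symm⟩

lemma tri_sdiff_c (a b c : Fin m) (hac : a ≠ c) (hbc : b ≠ c) :
    ({a, b, c} : Finset (Fin m)) \ {a, b} = {c} := by
  ext x
  simp only [Finset.mem_sdiff, Finset.mem_insert, Finset.mem_singleton]
  constructor
  · rintro ⟨h1 | h1 | h1, h2⟩ <;> tauto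
  · rintro rfl; exact ⟨by tauto, by tauto⟩

lemma tri_sdiff_b (a b c : Fin m) (hab : a ≠ b) (hbc : b ≠ c) :
    ({a, b, c} : Finset (Fin m)) \ {a, c} = {b} := by
  ext x
  simp only [Finset.mem_sdiff, Finset.mem_insert, Finset.mem_singleton]
  constructor
  · rintro ⟨h1 | h1 | h1, h2⟩ <;> tauto
  · rintro rfl; exact ⟨by tauto, by tauto⟩

lemma filter_pair_card (a b : Fin m) (hab : a ≠ b) :
    (({a, b} : Finset (Fin m)).filter (fun u => u < b)).card = (if a < b then 1 else 0) := by
  rw [Finset.card_filter, Finset.sum_pair hab]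
  simp [lt_irrefl]

lemma filter_tri_card (a b c w : Fin m) (hab : a ≠ b) (hac : a ≠ c) (hbc : b ≠ c) :
    (({a, b, c} : Finset (Fin m)).filter (fun u => u < w)).card =
      (if a < w then 1 else 0) + ((if b < w then 1 else 0) + (if c < w then 1 else 0)) := by
  rw [Finset.card_filter]
  rw [show ({a, b, c} : Finset (Fin m)) = insert a (insert b {c}) from rfl]
  rw [Finset.sum_insert (by simp [hab, hac]), Finset.sum_insert (by simp [hbc]),
    Finset.sum_singleton]

lemma ddzero {m : ℕ} (K : Finset (Finset (Fin m))) (hK : ∀ s ∈ K, ∀ t ⊆ s, t ∈ K) :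
    kbnd K 2 * kbnd K (2 + 1) = 0 := by
  ext r s
  rw [Matrix.mul_apply, Matrix.zero_apply]
  simp only [kbnd]
  by_cases hrs : r.1 ⊆ s.1
  · have hr1 : r.1.card = 1 := r.2.2
    obtain ⟨a, ha⟩ := Finset.card_eq_one.mp hr1
    have hs3 : s.1.card = 3 := s.2.2
    have hsd : (s.1 \ r.1).card = 2 := by rw [Finset.card_sdiff_of_subset hrs, hr1, hs3]
    obtain ⟨b, c, hbc, hbc2⟩ := Finset.card_eq_two.mp hsd
    have hbmem : b ∈ s.1 \ r.1 := by rw [hbc2]; simp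
    have hcmem : c ∈ s.1 \ r.1 := by rw [hbc2]; simp
    rw [Finset.mem_sdiff, ha, Finset.mem_singleton] at hbmem hcmem
    have hab : a ≠ b := fun h => hbmem.2 h.symm
    have hac : a ≠ c := fun h => hcmem.2 h.symm
    have hsu : s.1 = {a, b, c} := by
      rw [← Finset.union_sdiff_of_subset hrs, hbc2, ha, ← Finset.insert_eq]
    have has : a ∈ s.1 := hrs (by rw [ha]; exact Finset.mem_singleton_self a)
    have ht1K : ({a, b} : Finset (Fin m)) ∈ K := by
      refine hK s.1 s.2.1 _ ?_
      rw [hsu]; intro x hx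
      simp only [Finset.mem_insert, Finset.mem_singleton] at hx ⊢; tauto
    have ht2K : ({a, c} : Finset (Fin m)) ∈ K := by
      refine hK s.1 s.2.1 _ ?_
      rw [hsu]; intro x hx
      simp only [Finset.mem_insert, Finset.mem_singleton] at hx ⊢; tauto
    set t₁ : {t : Finset (Fin m) // t ∈ K ∧ t.card = 2} :=
      ⟨{a, b}, ht1K, Finset.card_pair hab⟩ with ht₁
    set t₂ : {t : Finset (Fin m) // t ∈ K ∧ t.card = 2} :=
      ⟨{a, c}, ht2K, Finset.card_pair hac⟩ with ht₂
    have hne : t₁ ≠ t₂ := by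
      intro h
      have : b ∈ ({a, c} : Finset (Fin m)) := by
        rw [← show t₁.1 = ({a,c} : Finset (Fin m)) from congrArg Subtype.val h]
        simp [t₁]
      simp only [Finset.mem_insert, Finset.mem_singleton] at this
      tauto
    rw [Finset.sum_eq_add t₁ t₂ hne ?_ (fun h => absurd (Finset.mem_univ _) h)
      (fun h => absurd (Finset.mem_univ _) h)]
    · -- main computation
      have e1 : csign t₁.1 r.1 = (-1 : ℤ) ^ (if a < b then 1 else 0) := by
        rw [ha, csign_sdiff (by simp) (pair_sdiff_left a b hab), filter_pair_card a b hab]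
      have e2 : csign t₂.1 r.1 = (-1 : ℤ) ^ (if a < c then 1 else 0) := by
        rw [ha, csign_sdiff (by simp) (pair_sdiff_left a c hac), filter_pair_card a c hac]
      have e3 : csign s.1 t₁.1 = (-1 : ℤ) ^
          ((if a < c then 1 else 0) + ((if b < c then 1 else 0) + 0)) := by
        rw [hsu, csign_sdiff (by intro x hx; simp only [Finset.mem_insert,
          Finset.mem_singleton] at hx ⊢; tauto) (tri_sdiff_c a b c hac hbc),
          filter_tri_card a b c c hab hac hbc, if_neg (lt_irrefl c)]
      have e4 : csign s.1 t₂.1 = (-1 : ℤ) ^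
          ((if a < b then 1 else 0) + (0 + (if c < b then 1 else 0))) := by
        rw [hsu, csign_sdiff (by intro x hx; simp only [Finset.mem_insert,
          Finset.mem_singleton] at hx ⊢; tauto) (tri_sdiff_b a b c hab hbc),
          filter_tri_card a b c b hab hac hbc, if_neg (lt_irrefl b)]
      rw [e1, e2, e3, e4]
      rcases lt_or_gt_of_ne hab with h1 | h1 <;> rcases lt_or_gt_of_ne hac with h2 | h2 <;>
        rcases lt_or_gt_of_ne hbc with h3 | h3 <;>
        simp [h1, h2, h3, lt_asymm h1, lt_asymm h2, lt_asymm h3] <;> norm_num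
    · -- other terms vanish
      intro t _ hne'
      by_cases h1 : r.1 ⊆ t.1
      · by_cases h2 : t.1 ⊆ s.1
        · exfalso
          have hat : a ∈ t.1 := h1 (by rw [ha]; exact Finset.mem_singleton_self a)
          have h4 : (t.1 \ {a}).card = 1 := by
            rw [Finset.card_sdiff_of_subset (Finset.singleton_subset_iff.mpr hat), t.2.2,
              Finset.card_singleton]
          obtain ⟨w, hw⟩ := Finset.card_eq_one.mp h4
          have htw : t.1 = {a, w} := by
            rw [← Finset.union_sdiff_of_subset (Finset.singleton_subset_iff.mpr hat), hw,
              ← Finset.insert_eq]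
          have hwmem : w ∈ t.1 \ {a} := by rw [hw]; simp
          rw [Finset.mem_sdiff, Finset.mem_singleton] at hwmem
          have hws : w ∈ s.1 := h2 hwmem.1
          rw [hsu] at hws
          simp only [Finset.mem_insert, Finset.mem_singleton] at hws
          rcases hws with rfl | rfl | rfl
          · exact hwmem.2 rfl
          · exact hne'.1 (Subtype.ext htw)
          · exact hne'.2 (Subtype.ext htw)
        · rw [csign_not_subset h2, mul_zero]
      · rw [csign_not_subset h1, zero_mul]
  · apply Finset.sum_eq_zero
    intro t _
    by_cases h1 : r.1 ⊆ t.1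
    · by_cases h2 : t.1 ⊆ s.1
      · exact absurd (h1.trans h2) hrs
      · rw [csign_not_subset h2, mul_zero]
    · rw [csign_not_subset h1, zero_mul]
end csignlemmas

set_option maxHeartbeats 1000000 in
lemma count_sols {m : ℕ} (K : Finset (Finset (Fin m)))
    (hK : ∀ s ∈ K, ∀ t ⊆ s, t ∈ K)
    (hH2 : LinearMap.ker (kbnd K (2 + 1)).mulVecLin = ⊥)
    (hH1 : Nonempty ((Hlow K 2) ≃ₗ[ℤ] ZMod 2)) (q : ℕ) (hq : 0 < q) :
    Nat.card {φ : {s : Finset (Fin m) // s ∈ K ∧ s.card = 2 + 1} → ZMod q //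
      ((kbnd K (2 + 1)).map (Int.cast : ℤ → ZMod q)).mulVec φ = 0} =
      if 2 ∣ q then 2 else 1 := by
  haveI : NeZero q := ⟨hq.ne'⟩
  obtain ⟨e⟩ := hH1
  set F := {s : Finset (Fin m) // s ∈ K ∧ s.card = 2 + 1}
  -- casting helper
  have cast_mv : ∀ (v : F → ℤ),
      (fun t => (((v t : ℤ)) : ZMod q)) = ((Int.castRingHom (ZMod q)) ∘ v) := fun v => rfl
  have cast_mv2 : ∀ (v : F → ℤ) (e'),
      (((kbnd K (2 + 1)).mulVec v e' : ℤ) : ZMod q) =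
        ((kbnd K (2 + 1)).map (Int.cast : ℤ → ZMod q)).mulVec (fun t => ((v t : ℤ) : ZMod q)) e' := by
    intro v e'
    rw [cast_mv]
    exact RingHom.map_mulVec (Int.castRingHom (ZMod q)) _ v e'
  set ψof : (F → ZMod q) → F → ℤ := fun φ t => ((φ t).val : ℤ) with hψof
  have hcast : ∀ (φ : F → ZMod q) (t), ((ψof φ t : ℤ) : ZMod q) = φ t := by
    intro φ t
    simp [ψof, ZMod.natCast_val, ZMod.cast_id]
  set yof : (F → ZMod q) → ({s : Finset (Fin m) // s ∈ K ∧ s.card = 2} → ℤ) :=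
    fun φ e' => ((kbnd K (2 + 1)).mulVec (ψof φ) e') / (q : ℤ) with hyof
  have hdvd : ∀ (φ : F → ZMod q),
      ((kbnd K (2 + 1)).map (Int.cast : ℤ → ZMod q)).mulVec φ = 0 →
      ∀ e', (q : ℤ) ∣ (kbnd K (2 + 1)).mulVec (ψof φ) e' := by
    intro φ hsol e'
    rw [← ZMod.intCast_zmod_eq_zero_iff_dvd]
    rw [cast_mv2, funext (hcast φ), hsol]
    rfl
  have hqy : ∀ (φ : F → ZMod q),
      ((kbnd K (2 + 1)).map (Int.cast : ℤ → ZMod q)).mulVec φ = 0 →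
      (q : ℤ) • yof φ = (kbnd K (2 + 1)).mulVec (ψof φ) := by
    intro φ hsol
    funext e'
    simp only [yof, Pi.smul_apply, smul_eq_mul]
    exact Int.mul_ediv_cancel' (hdvd φ hsol e')
  have hyZ : ∀ (φ : F → ZMod q),
      ((kbnd K (2 + 1)).map (Int.cast : ℤ → ZMod q)).mulVec φ = 0 →
      yof φ ∈ Zlow K 2 := by
    intro φ hsol
    have h1 : (kbnd K 2).mulVecLin ((q : ℤ) • yof φ) = 0 := by
      rw [hqy φ hsol]
      show (kbnd K 2) *ᵥ ((kbnd K (2 + 1)) *ᵥ (ψof φ)) = 0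
      rw [Matrix.mulVec_mulVec, ddzero K hK, Matrix.zero_mulVec]
    rw [LinearMap.map_smul] at h1
    rcases smul_eq_zero.mp h1 with h | h
    · exact absurd h (by exact_mod_cast hq.ne')
    · exact h
  have htor : ∀ (φ : F → ZMod q)
      (h : ((kbnd K (2 + 1)).map (Int.cast : ℤ → ZMod q)).mulVec φ = 0),
      (q : ℤ) • (Submodule.Quotient.mk ⟨yof φ, hyZ φ h⟩ : Hlow K 2) = 0 := by
    intro φ h
    rw [← Submodule.Quotient.mk_smul, Submodule.Quotient.mk_eq_zero]
    rw [Submodule.mem_comap]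
    show (q : ℤ) • yof φ ∈ Blow K 2
    rw [hqy φ h]
    exact ⟨ψof φ, rfl⟩
  set T := {x : Hlow K 2 // (q : ℤ) • x = 0}
  have step1 : Nat.card {φ : F → ZMod q //
      ((kbnd K (2 + 1)).map (Int.cast : ℤ → ZMod q)).mulVec φ = 0} = Nat.card T := by
    have hbij : Function.Bijective
        (fun φ : {φ : F → ZMod q //
            ((kbnd K (2 + 1)).map (Int.cast : ℤ → ZMod q)).mulVec φ = 0} =>
          (⟨Submodule.Quotient.mk ⟨yof φ.1, hyZ φ.1 φ.2⟩, htor φ.1 φ.2⟩ : T)) := by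
      constructor
      · rintro ⟨φ₁, h₁⟩ ⟨φ₂, h₂⟩ h
        simp only [Subtype.mk_eq_mk, Submodule.Quotient.eq, Submodule.mem_comap] at h
        have h' : yof φ₁ - yof φ₂ ∈ Blow K 2 := h
        obtain ⟨δ, hδ⟩ := h'
        have hz : (kbnd K (2 + 1)).mulVecLin (ψof φ₁ - ψof φ₂ - (q : ℤ) • δ) = 0 := by
          rw [map_sub, map_sub, _root_.map_smul, hδ]
          show (kbnd K (2+1)) *ᵥ (ψof φ₁) - (kbnd K (2+1)) *ᵥ (ψof φ₂)
            - (q:ℤ) • (yof φ₁ - yof φ₂) = 0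
          rw [← hqy φ₁ h₁, ← hqy φ₂ h₂, smul_sub]
          abel
        have hz' : ψof φ₁ - ψof φ₂ - (q : ℤ) • δ = 0 := by
          have hker : ψof φ₁ - ψof φ₂ - (q : ℤ) • δ ∈
              LinearMap.ker (kbnd K (2 + 1)).mulVecLin := hz
          rwa [hH2, Submodule.mem_bot] at hker
        have hps : ∀ t, ψof φ₁ t = ψof φ₂ t + (q : ℤ) * δ t := by
          intro t
          have := congrFun hz' t
          simp only [Pi.sub_apply, Pi.smul_apply, smul_eq_mul, Pi.zero_apply] at this
          omega
        apply Subtype.ext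
        funext t
        show φ₁ t = φ₂ t
        rw [← hcast φ₁ t, ← hcast φ₂ t, hps t]
        push_cast
        simp [ZMod.natCast_self]
      · rintro ⟨x, hx⟩
        obtain ⟨z, rfl⟩ := Submodule.Quotient.mk_surjective _ x
        rw [← Submodule.Quotient.mk_smul, Submodule.Quotient.mk_eq_zero, Submodule.mem_comap] at hx
        have hx' : (q : ℤ) • z.1 ∈ Blow K 2 := hx
        obtain ⟨δ, hδ⟩ := hx'
        have hδ' : (kbnd K (2 + 1)).mulVec δ = (q : ℤ) • z.1 := hδ
        have hsolφ : ((kbnd K (2 + 1)).map (Int.cast : ℤ → ZMod q)).mulVec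
            (fun t => ((δ t : ℤ) : ZMod q)) = 0 := by
          funext e'
          rw [← cast_mv2 δ e', hδ']
          simp only [Pi.smul_apply, smul_eq_mul]
          push_cast
          simp [ZMod.intCast_zmod_eq_zero_iff_dvd]
        refine ⟨⟨fun t => ((δ t : ℤ) : ZMod q), hsolφ⟩, ?_⟩
        apply Subtype.ext
        show Submodule.Quotient.mk _ = Submodule.Quotient.mk z
        rw [Submodule.Quotient.eq, Submodule.mem_comap]
        set φ : F → ZMod q := fun t => ((δ t : ℤ) : ZMod q) with hφdef
        have hgd : ∀ t, (q : ℤ) ∣ ψof φ t - δ t := by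
          intro t
          rw [← ZMod.intCast_zmod_eq_zero_iff_dvd]
          push_cast
          rw [hcast φ t]
          simp [hφdef]
        set γ : F → ℤ := fun t => (ψof φ t - δ t) / (q : ℤ) with hγdef
        have hγ : (q : ℤ) • γ = ψof φ - δ := by
          funext t
          simp only [γ, Pi.smul_apply, Pi.sub_apply, smul_eq_mul]
          exact Int.mul_ediv_cancel' (hgd t)
        show yof φ - z.1 ∈ Blow K 2
        refine ⟨γ, ?_⟩
        have hcancel : (q : ℤ) • ((kbnd K (2 + 1)).mulVecLin γ) = (q : ℤ) • (yof φ - z.1) := by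
          rw [← _root_.map_smul, hγ, map_sub]
          show (kbnd K (2+1)) *ᵥ (ψof φ) - (kbnd K (2+1)) *ᵥ δ = _
          rw [← hqy φ hsolφ, hδ', smul_sub]
        exact smul_right_injective _ (by exact_mod_cast hq.ne' : (q : ℤ) ≠ 0) hcancel
    exact Nat.card_eq_of_bijective _ hbij
  rw [step1]
  have step2 : Nat.card T = Nat.card {x : ZMod 2 // (q : ℤ) • x = 0} := by
    apply Nat.card_congr
    refine Equiv.subtypeEquiv e.toEquiv (fun x => ?_)
    constructor
    · intro h
      show (q : ℤ) • e x = 0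
      rw [← _root_.map_smul, h, map_zero]
    · intro h
      apply e.injective
      rw [_root_.map_smul, map_zero]
      exact h
  rw [step2]
  by_cases h2 : 2 ∣ q
  · rw [if_pos h2]
    have hall : ∀ x : ZMod 2, (q : ℤ) • x = 0 := by
      intro x
      rw [zsmul_eq_mul]
      push_cast
      rw [show ((q : ZMod 2)) = 0 from (ZMod.natCast_eq_zero_iff q 2).mpr h2, zero_mul]
    rw [Nat.card_congr (Equiv.subtypeUnivEquiv hall)]
    simp [Nat.card_eq_fintype_card]
  · rw [if_neg h2]
    have hone : (q : ZMod 2) = 1 := by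
      have : q % 2 = 1 := by omega
      rw [← ZMod.natCast_mod, this, Nat.cast_one]
    have hiff : ∀ x : ZMod 2, (q : ℤ) • x = 0 ↔ x = 0 := by
      intro x
      rw [zsmul_eq_mul]
      push_cast
      rw [hone, one_mul]
    apply Nat.card_eq_one_iff_unique.mpr
    constructor
    · constructor
      intro a b
      exact Subtype.ext (((hiff a.1).mp a.2).trans ((hiff b.1).mp b.2).symm)
    · exact ⟨0, (hiff 0).mpr rfl⟩

lemma half_sol {m : ℕ} (K : Finset (Finset (Fin m)))
    (hsurface : ∀ r ∈ K, r.card = 2 → (K.filter (fun s => r ⊆ s ∧ s.card = 3)).card = 2)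
    (q : ℕ) [NeZero q] (h2 : 2 ∣ q) :
    ((kbnd K (2 + 1)).map (Int.cast : ℤ → ZMod q)).mulVec
      (fun _ => ((q / 2 : ℕ) : ZMod q)) = 0 := by
  funext e'
  simp only [Matrix.mulVec, dotProduct, Matrix.map_apply, kbnd, Pi.zero_apply]
  rw [← Finset.sum_mul]
  have hcastsum : (∑ s : {s : Finset (Fin m) // s ∈ K ∧ s.card = 2 + 1},
      ((csign s.1 e'.1 : ℤ) : ZMod q)) =
      (((∑ s : {s : Finset (Fin m) // s ∈ K ∧ s.card = 2 + 1}, csign s.1 e'.1) : ℤ) : ZMod q) := by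
    push_cast; rfl
  have hc : (2 : ℤ) ∣ ∑ s : {s : Finset (Fin m) // s ∈ K ∧ s.card = 2 + 1}, csign s.1 e'.1 := by
    have h0 : ((∑ s : {s : Finset (Fin m) // s ∈ K ∧ s.card = 2 + 1},
        csign s.1 e'.1 : ℤ) : ZMod 2) = 0 := by
      push_cast
      have hterm : ∀ s : {s : Finset (Fin m) // s ∈ K ∧ s.card = 2 + 1},
          ((csign s.1 e'.1 : ℤ) : ZMod 2) = if e'.1 ⊆ s.1 then 1 else 0 := by
        intro s
        rw [csign]
        split
        case isTrue h =>
          push_cast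
          rw [show ((-1 : ZMod 2)) = 1 from by decide]
          simp only [one_pow]
          rw [Finset.sum_const, Finset.card_sdiff_of_subset h, s.2.2, e'.2.2]
          norm_num
        case isFalse h => push_cast; rfl
      rw [Finset.sum_congr rfl (fun s _ => hterm s), Finset.sum_boole]
      have hbridge : (Finset.univ.filter
          (fun s : {s : Finset (Fin m) // s ∈ K ∧ s.card = 2 + 1} => e'.1 ⊆ s.1)).card =
          (K.filter (fun s => e'.1 ⊆ s ∧ s.card = 3)).card := by
        apply Finset.card_bij (fun s _ => s.1)
        · intro s hs
          simp only [Finset.mem_filter, Finset.mem_univ, true_and] at hs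
          simp only [Finset.mem_filter]
          exact ⟨s.2.1, hs, by have := s.2.2; omega⟩
        · intro s1 hs1 s2 hs2 h
          exact Subtype.ext h
        · intro t ht
          simp only [Finset.mem_filter] at ht
          exact ⟨⟨t, ht.1, by have := ht.2.2; omega⟩, by simp [ht.2.1], rfl⟩
      rw [hbridge, hsurface e'.1 e'.2.1 e'.2.2]
      decide
    have := (ZMod.intCast_zmod_eq_zero_iff_dvd _ 2).mp h0
    exact_mod_cast this
  obtain ⟨k, hk⟩ := hc
  rw [hcastsum, hk]
  have : ((2 * k : ℤ) : ZMod q) * ((q / 2 : ℕ) : ZMod q) =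
      (k : ZMod q) * (((2 * (q / 2)) : ℕ) : ZMod q) := by push_cast; ring
  rw [this, Nat.mul_div_cancel' h2, ZMod.natCast_self, mul_zero]


/-- Example 2.16: if `Δ` is a triangulation of `ℝP²` — i.e. a
`2`-dimensional simplicial complex, each of whose edges lies in exactly two triangles,
with `H₂(Δ; ℤ) = 0` and `H₁(Δ; ℤ) ≅ ℤ/2` — then the number of nowhere-zero modular
`q`-flows is `1` for even `q` and `0` for odd `q`; in particular `Φ_Δ` is not a
polynomial in `q`. -/
theorem stmt18 {m : ℕ} (K : Finset (Finset (Fin m)))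
    (hK : ∀ s ∈ K, ∀ t ⊆ s, t ∈ K)
    (hdim : ∀ s ∈ K, s.card ≤ 3)
    (hfacet : ∃ s ∈ K, s.card = 3)
    (hsurface : ∀ r ∈ K, r.card = 2 → (K.filter (fun s => r ⊆ s ∧ s.card = 3)).card = 2)
    (hH2 : LinearMap.ker (kbnd K (2 + 1)).mulVecLin = ⊥)
    (hH1 : Nonempty ((Hlow K 2) ≃ₗ[ℤ] ZMod 2)) :
    (∀ q : ℕ, 0 < q → kFlowCount K 2 q = if 2 ∣ q then 1 else 0) ∧
    ¬ ∃ p : Polynomial ℚ, ∀ q : ℕ, 0 < q →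
        (kFlowCount K 2 q : ℚ) = p.eval (q : ℚ) := by
  classical
  obtain ⟨s₀, hs₀K, hs₀c⟩ := hfacet
  have hs₀' : s₀.card = 2 + 1 := by omega
  set s₀' : {s : Finset (Fin m) // s ∈ K ∧ s.card = 2 + 1} := ⟨s₀, hs₀K, hs₀'⟩
  have main : ∀ q : ℕ, 0 < q → kFlowCount K 2 q = if 2 ∣ q then 1 else 0 := by
    intro q hq
    haveI : NeZero q := ⟨hq.ne'⟩
    have hcount := count_sols K hK hH2 hH1 q hq
    unfold kFlowCount
    have h0sol : ((kbnd K (2 + 1)).map (Int.cast : ℤ → ZMod q)).mulVec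
        (0 : {s : Finset (Fin m) // s ∈ K ∧ s.card = 2 + 1} → ZMod q) = 0 :=
      Matrix.mulVec_zero _
    by_cases h2 : 2 ∣ q
    · rw [if_pos h2] at hcount ⊢
      set v : {s : Finset (Fin m) // s ∈ K ∧ s.card = 2 + 1} → ZMod q :=
        fun _ => ((q / 2 : ℕ) : ZMod q) with hv
      have hvsol := half_sol K hsurface q h2
      have hvne : ∀ s, v s ≠ 0 := by
        intro s h
        rw [hv] at h
        have hdvd := (ZMod.natCast_eq_zero_iff _ q).mp h
        have h1 : 0 < q / 2 := by omega
        have := Nat.le_of_dvd h1 hdvd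
        omega
      have h0v : (0 : {s : Finset (Fin m) // s ∈ K ∧ s.card = 2 + 1} → ZMod q) ≠ v :=
        fun h => hvne s₀' (congrFun h s₀').symm
      have claim : ∀ φ, ((kbnd K (2 + 1)).map (Int.cast : ℤ → ZMod q)).mulVec φ = 0 →
          φ = 0 ∨ φ = v := by
        intro φ hφ
        by_contra hcon
        push_neg at hcon
        haveI : Fintype {φ : {s : Finset (Fin m) // s ∈ K ∧ s.card = 2 + 1} → ZMod q //
            ((kbnd K (2 + 1)).map (Int.cast : ℤ → ZMod q)).mulVec φ = 0} := Fintype.ofFinite _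
        have h3 : ({⟨0, h0sol⟩, ⟨v, hvsol⟩, ⟨φ, hφ⟩} :
            Finset {φ : {s : Finset (Fin m) // s ∈ K ∧ s.card = 2 + 1} → ZMod q //
            ((kbnd K (2 + 1)).map (Int.cast : ℤ → ZMod q)).mulVec φ = 0}).card = 3 := by
          rw [Finset.card_insert_of_notMem, Finset.card_insert_of_notMem,
            Finset.card_singleton]
          · simp only [Finset.mem_singleton, Subtype.mk_eq_mk]
            exact fun h => hcon.2 h.symm
          · simp only [Finset.mem_insert, Finset.mem_singleton, Subtype.mk_eq_mk]
            push_neg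
            exact ⟨h0v, fun h => hcon.1 h.symm⟩
        have hle := Finset.card_le_univ ({⟨0, h0sol⟩, ⟨v, hvsol⟩, ⟨φ, hφ⟩} :
            Finset {φ : {s : Finset (Fin m) // s ∈ K ∧ s.card = 2 + 1} → ZMod q //
            ((kbnd K (2 + 1)).map (Int.cast : ℤ → ZMod q)).mulVec φ = 0})
        rw [h3] at hle
        rw [Nat.card_eq_fintype_card] at hcount
        omega
      refine Nat.card_eq_one_iff_unique.mpr ⟨⟨?_⟩, ⟨⟨v, hvsol, hvne⟩⟩⟩
      rintro ⟨φ₁, hsol₁, hnz₁⟩ ⟨φ₂, hsol₂, hnz₂⟩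
      have e1 : φ₁ = v := by
        rcases claim φ₁ hsol₁ with h | h
        · exact absurd (congrFun h s₀') (hnz₁ s₀')
        · exact h
      have e2 : φ₂ = v := by
        rcases claim φ₂ hsol₂ with h | h
        · exact absurd (congrFun h s₀') (hnz₂ s₀')
        · exact h
      exact Subtype.ext (e1.trans e2.symm)
    · rw [if_neg h2] at hcount ⊢
      obtain ⟨hsub, -⟩ := Nat.card_eq_one_iff_unique.mp hcount
      have hall : ∀ φ, ((kbnd K (2 + 1)).map (Int.cast : ℤ → ZMod q)).mulVec φ = 0 →
          φ = 0 := by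
        intro φ h
        exact Subtype.ext_iff.mp (@Subsingleton.elim _ hsub ⟨φ, h⟩ ⟨0, h0sol⟩)
      haveI : IsEmpty {φ : {s : Finset (Fin m) // s ∈ K ∧ s.card = 2 + 1} → ZMod q //
          ((kbnd K (2 + 1)).map (Int.cast : ℤ → ZMod q)).mulVec φ = 0 ∧ ∀ s, φ s ≠ 0} :=
        ⟨fun x => x.2.2 s₀' (congrFun (hall x.1 x.2.1) s₀')⟩
      exact Nat.card_of_isEmpty
  refine ⟨main, ?_⟩
  rintro ⟨p, hp⟩
  have hp1 : p.eval ((1 : ℕ) : ℚ) = 0 := by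
    rw [← hp 1 one_pos, main 1 one_pos]
    norm_num
  have heven : ∀ k : ℕ, p.eval ((2 * (k + 1) : ℕ) : ℚ) = 1 := by
    intro k
    rw [← hp _ (by positivity), main _ (by positivity), if_pos ⟨k + 1, rfl⟩]
    norm_num
  have hpc : p = Polynomial.C 1 := by
    rw [← sub_eq_zero]
    apply Polynomial.eq_zero_of_infinite_isRoot
    apply Set.infinite_of_injective_forall_mem (f := fun k : ℕ => ((2 * (k + 1) : ℕ) : ℚ))
    · intro a b h
      have : 2 * (a + 1) = 2 * (b + 1) := Nat.cast_inj.mp h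
      omega
    · intro k
      simp only [Set.mem_setOf_eq, Polynomial.IsRoot, Polynomial.eval_sub, Polynomial.eval_C,
        heven k, sub_self]
  rw [hpc] at hp1
  simp at hp1
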